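/- Let c₁ = 355.03, c₂ = −68.19, c₃ = 791.32 and define V : ℝ → ℝ by V(φ) = c₁(1 + cos φ) + c₂(1 − cos 2φ) + c₃(1 + cos 3φ). Then the set {φ ∈ [0, 2π) : V′(φ) = 0} of critical points of V in one period is finite and has exactly 6 elements. -/

import Mathlib

open Real

noncomputable def V (φ : ℝ) : ℝ :=
  355.03 * (1 + Real.cos φ) + (-68.19) * (1 - Real.cos (2 * φ)) +
    791.32 * (1 + Real.cos (3 * φ))

lemma hasDerivAt_V (φ : ℝ) :
    HasDerivAt V (Real.sin φ * (2018.93 - 272.76 * Real.cos φ - 9495.84 * Real.cos φ ^ 2)) φ := by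
  have h1 : HasDerivAt (fun x : ℝ => Real.cos x) (-Real.sin φ) φ := Real.hasDerivAt_cos φ
  have h2 : HasDerivAt (fun x : ℝ => Real.cos (2*x)) (-Real.sin (2*φ) * 2) φ := by
    have := (Real.hasDerivAt_cos (2*φ)).comp φ ((hasDerivAt_id φ).const_mul 2)
    simpa [Function.comp_def] using this
  have h3 : HasDerivAt (fun x : ℝ => Real.cos (3*x)) (-Real.sin (3*φ) * 3) φ := by
    have := (Real.hasDerivAt_cos (3*φ)).comp φ ((hasDerivAt_id φ).const_mul 3)
    simpa [Function.comp_def] using this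
  have H := (((h1.const_add 1).const_mul 355.03).add
      (((h2.const_sub 1).const_mul (-68.19)))).add ((h3.const_add 1).const_mul 791.32)
  have hE : V = fun φ => 355.03 * (1 + Real.cos φ) + (-68.19) * (1 - Real.cos (2 * φ)) +
      791.32 * (1 + Real.cos (3 * φ)) := rfl
  rw [hE]
  refine H.congr_deriv (Eq.symm ?_)
  have hpy := Real.sin_sq_add_cos_sq φ
  rw [Real.sin_two_mul, Real.sin_three_mul]
  linear_combination (-9495.84 * Real.sin φ) * hpy

noncomputable def sqD : ℝ := Real.sqrt 76760143.0224

noncomputable def rootA : ℝ := (-272.76 + sqD) / 18991.68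
noncomputable def rootB : ℝ := (-272.76 - sqD) / 18991.68

lemma sqD_sq : sqD ^ 2 = 76760143.0224 := Real.sq_sqrt (by norm_num)

lemma sqD_pos : 0 < sqD := Real.sqrt_pos.mpr (by norm_num)

lemma sqD_lt : sqD < 18718.92 := by
  rw [show (18718.92:ℝ) = Real.sqrt (18718.92^2) from (Real.sqrt_sq (by norm_num)).symm]
  exact Real.sqrt_lt_sqrt (by norm_num) (by norm_num)

lemma rootA_mem : -1 < rootA ∧ rootA < 1 := by
  have h1 := sqD_pos; have h2 := sqD_lt
  unfold rootA
  constructor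
  · rw [lt_div_iff₀ (by norm_num)]; linarith
  · rw [div_lt_iff₀ (by norm_num)]; linarith

lemma rootB_mem : -1 < rootB ∧ rootB < 1 := by
  have h1 := sqD_pos; have h2 := sqD_lt
  unfold rootB
  constructor
  · rw [lt_div_iff₀ (by norm_num)]; linarith
  · rw [div_lt_iff₀ (by norm_num)]; linarith

lemma rootA_ne_rootB : rootA ≠ rootB := by
  have := sqD_pos
  unfold rootA rootB
  intro h
  rw [div_eq_div_iff (by norm_num) (by norm_num)] at h
  nlinarith

lemma quad_factor (c : ℝ) :
    2018.93 - 272.76 * c - 9495.84 * c ^ 2 = -9495.84 * (c - rootA) * (c - rootB) := by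
  have h := sqD_sq
  unfold rootA rootB
  field_simp
  ring_nf
  nlinarith [h]

lemma quad_zero_iff (c : ℝ) :
    2018.93 - 272.76 * c - 9495.84 * c ^ 2 = 0 ↔ c = rootA ∨ c = rootB := by
  rw [quad_factor]
  constructor
  · intro h
    rcases mul_eq_zero.mp h with h | h
    · rcases mul_eq_zero.mp h with h | h
      · norm_num at h
      · left; linarith [sub_eq_zero.mp h]
    · right; linarith [sub_eq_zero.mp h]
  · rintro (rfl | rfl) <;> ring

lemma deriv_V_zero_iff (φ : ℝ) :
    deriv V φ = 0 ↔ Real.sin φ = 0 ∨ Real.cos φ = rootA ∨ Real.cos φ = rootB := by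
  rw [(hasDerivAt_V φ).deriv, mul_eq_zero, quad_zero_iff]

lemma cos_two_pi_sub' (x : ℝ) : Real.cos (2*π - x) = Real.cos x := by
  simp [Real.cos_sub, Real.cos_two_pi, Real.sin_two_pi]

lemma cos_eq_cases {φ x : ℝ} (h0 : 0 ≤ φ) (h2 : φ < 2*π) (hc : Real.cos φ = x) :
    φ = Real.arccos x ∨ φ = 2*π - Real.arccos x := by
  rcases le_or_gt φ π with h | h
  · left; rw [← hc, Real.arccos_cos h0 h]
  · right
    have h1 : 0 ≤ 2*π - φ := by linarith
    have h2' : 2*π - φ ≤ π := by linarith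
    have hcc : Real.cos (2*π - φ) = x := by rw [cos_two_pi_sub']; exact hc
    rw [← hcc, Real.arccos_cos h1 h2']; ring

lemma sin_zero_cases {φ : ℝ} (h0 : 0 ≤ φ) (h2 : φ < 2*π) (hs : Real.sin φ = 0) :
    φ = 0 ∨ φ = π := by
  rw [Real.sin_eq_zero_iff] at hs
  obtain ⟨n, hn⟩ := hs
  have hπ := Real.pi_pos
  have hn0 : (0:ℝ) ≤ (n:ℝ) := by
    by_contra h; push_neg at h
    have : (n:ℝ) * π < 0 := mul_neg_of_neg_of_pos h hπ
    linarith
  have hn2 : (n:ℝ) < 2 := by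
    by_contra h; push_neg at h
    have : 2 * π ≤ (n:ℝ) * π := by nlinarith
    linarith
  have h0' : (0:ℤ) ≤ n := by exact_mod_cast hn0
  have h2' : n < 2 := by exact_mod_cast hn2
  interval_cases n
  · left; simpa using hn.symm
  · right; simpa using hn.symm

theorem butane_six_critical_points :
    {φ ∈ Set.Ico (0 : ℝ) (2 * π) | deriv V φ = 0}.Finite ∧
    {φ ∈ Set.Ico (0 : ℝ) (2 * π) | deriv V φ = 0}.ncard = 6 := by
  have hπ := Real.pi_pos
  set α := Real.arccos rootA with hαdef
  set β := Real.arccos rootB with hβdef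
  have hα0 : 0 < α := Real.arccos_pos.mpr rootA_mem.2
  have hαπ : α < π := lt_of_le_of_ne (Real.arccos_le_pi _)
    (fun h => by have := Real.arccos_eq_pi.mp h; linarith [rootA_mem.1])
  have hβ0 : 0 < β := Real.arccos_pos.mpr rootB_mem.2
  have hβπ : β < π := lt_of_le_of_ne (Real.arccos_le_pi _)
    (fun h => by have := Real.arccos_eq_pi.mp h; linarith [rootB_mem.1])
  have hcα : Real.cos α = rootA := Real.cos_arccos rootA_mem.1.le rootA_mem.2.le
  have hcβ : Real.cos β = rootB := Real.cos_arccos rootB_mem.1.le rootB_mem.2.le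
  have hab : α ≠ β := fun h => rootA_ne_rootB (by rw [← hcα, h, hcβ])
  have hset : {φ ∈ Set.Ico (0 : ℝ) (2 * π) | deriv V φ = 0} =
      ({0, π, α, 2*π - α, β, 2*π - β} : Set ℝ) := by
    ext φ
    simp only [Set.mem_setOf_eq, Set.mem_Ico, Set.mem_insert_iff, Set.mem_singleton_iff]
    constructor
    · rintro ⟨⟨h0, h2⟩, hd⟩
      rw [deriv_V_zero_iff] at hd
      rcases hd with hs | hc | hc
      · rcases sin_zero_cases h0 h2 hs with h | h <;> tauto
      · rcases cos_eq_cases h0 h2 hc with h | h <;> tauto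
      · rcases cos_eq_cases h0 h2 hc with h | h <;> tauto
    · intro h
      rcases h with rfl | rfl | rfl | rfl | rfl | rfl
      · exact ⟨⟨le_refl 0, by linarith⟩, by rw [deriv_V_zero_iff]; left; exact Real.sin_zero⟩
      · exact ⟨⟨hπ.le, by linarith⟩, by rw [deriv_V_zero_iff]; left; exact Real.sin_pi⟩
      · exact ⟨⟨hα0.le, by linarith⟩, by rw [deriv_V_zero_iff]; right; left; exact hcα⟩
      · refine ⟨⟨by linarith, by linarith⟩, ?_⟩
        rw [deriv_V_zero_iff]; right; left; rw [cos_two_pi_sub']; exact hcα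
      · exact ⟨⟨hβ0.le, by linarith⟩, by rw [deriv_V_zero_iff]; right; right; exact hcβ⟩
      · refine ⟨⟨by linarith, by linarith⟩, ?_⟩
        rw [deriv_V_zero_iff]; right; right; rw [cos_two_pi_sub']; exact hcβ
  rw [hset]
  have hαβ' : 2*π - α ≠ 2*π - β := fun h => hab (by linarith)
  have f1 : ({2*π - β} : Set ℝ).Finite := Set.finite_singleton _
  have f2 : ({β, 2*π - β} : Set ℝ).Finite := f1.insert _
  have f3 : ({2*π - α, β, 2*π - β} : Set ℝ).Finite := f2.insert _
  have f4 : ({α, 2*π - α, β, 2*π - β} : Set ℝ).Finite := f3.insert _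
  have f5 : ({π, α, 2*π - α, β, 2*π - β} : Set ℝ).Finite := f4.insert _
  have n5 : β ∉ ({2*π - β} : Set ℝ) := by
    simp only [Set.mem_singleton_iff]; intro h; linarith
  have n4 : 2*π - α ∉ ({β, 2*π - β} : Set ℝ) := by
    simp only [Set.mem_insert_iff, Set.mem_singleton_iff]; push_neg
    exact ⟨fun h => by linarith, hαβ'⟩
  have n3 : α ∉ ({2*π - α, β, 2*π - β} : Set ℝ) := by
    simp only [Set.mem_insert_iff, Set.mem_singleton_iff]; push_neg
    exact ⟨fun h => by linarith, hab, fun h => by linarith⟩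
  have n2 : π ∉ ({α, 2*π - α, β, 2*π - β} : Set ℝ) := by
    simp only [Set.mem_insert_iff, Set.mem_singleton_iff]; push_neg
    exact ⟨fun h => by linarith, fun h => by linarith, fun h => by linarith, fun h => by linarith⟩
  have n1 : (0:ℝ) ∉ ({π, α, 2*π - α, β, 2*π - β} : Set ℝ) := by
    simp only [Set.mem_insert_iff, Set.mem_singleton_iff]; push_neg
    exact ⟨fun h => by linarith, fun h => by linarith, fun h => by linarith,
      fun h => by linarith, fun h => by linarith⟩
  refine ⟨f5.insert _, ?_⟩
  rw [Set.ncard_insert_of_notMem n1 f5, Set.ncard_insert_of_notMem n2 f4,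
      Set.ncard_insert_of_notMem n3 f3, Set.ncard_insert_of_notMem n4 f2,
      Set.ncard_insert_of_notMem n5 f1, Set.ncard_singleton]
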